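/- There exist a 2-state, 2-actions-per-state deterministic MDP sequence $p_1, \dots, p_W$ (with $W = 4\tau$ for a positive integer $\tau$) in which each individual MDP has diameter 1 and the total $\ell_1$ variation $\sum_{t=1}^{W-1}\max_{s,a}\|p_{t+1}(\cdot|s,a)-p_t(\cdot|s,a)\|_1$ is at most $6$, yet there is a deterministic trajectory $(s_1,a_1),\dots,(s_W,a_W)$ such that the empirical transition kernel $\hat p(s'|s,a) = \frac{\#\{q : (s_q,a_q,s_{q+1})=(s,a,s')\}}{\max(1, \#\{q : (s_q,a_q)=(s,a)\})}$ defines an MDP of diameter exactly $\tau + 1$. -/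

import Mathlib

open Finset
open scoped ENNReal

/-- Probability that a chain started at `s`, driven by the stochastic matrix `P`, avoids
the target state `tgt` during its first `n` steps. -/
noncomputable def surv (P : Fin 2 → Fin 2 → ℝ) (tgt : Fin 2) : ℕ → Fin 2 → ℝ
  | 0, _ => 1
  | n + 1, s => ∑ u, (if u = tgt then 0 else P s u * surv P tgt n u)

/-- Expected hitting time (in `ℝ≥0∞`) of `tgt` from `s` under the stochastic matrix `P`,
as the sum of the survival probabilities. -/
noncomputable def hitExp (P : Fin 2 → Fin 2 → ℝ) (tgt s : Fin 2) : ℝ≥0∞ :=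
  ∑' n : ℕ, ENNReal.ofReal (surv P tgt n s)

/-- Diameter of a (sub)stochastic kernel: maximum over ordered state pairs of the minimum
over stationary policies of the expected hitting time. -/
noncomputable def diam (p : Fin 2 → Fin 2 → Fin 2 → ℝ) : ℝ≥0∞ :=
  ⨆ s : Fin 2, ⨆ s' : Fin 2, ⨅ π : Fin 2 → Fin 2,
    hitExp (fun u v => p u (π u) v) s' s

/-- Empirical transition kernel computed from the trajectory `(s_q, a_q)_{q=1}^W`. -/
noncomputable def empK (W : ℕ) (s : ℕ → Fin 2) (a : ℕ → Fin 2)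
    (u : Fin 2) (b : Fin 2) (v : Fin 2) : ℝ :=
  (((Finset.Icc 1 W).filter (fun q => s q = u ∧ a q = b ∧ s (q + 1) = v)).card : ℝ) /
    ((max 1 ((Finset.Icc 1 W).filter (fun q => s q = u ∧ a q = b)).card : ℕ) : ℝ)

/-! ### Auxiliary constructions -/

/-- First deterministic kernel: action `b` at state `u` moves to `u + b`. -/
def K1 : Fin 2 → Fin 2 → Fin 2 → ℝ := fun u b v => if v = u + b then 1 else 0

/-- Second deterministic kernel: action `b` at state `u` moves to `u + b + 1`. -/
def K2 : Fin 2 → Fin 2 → Fin 2 → ℝ := fun u b v => if v = u + b + 1 then 1 else 0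

/-- The trajectory of states: stay at `0` for the whole horizon. -/
def sfun (τ : ℕ) : ℕ → Fin 2 := fun q => if q ≤ 4*τ then 0 else 1

/-- The actions taken along the trajectory. -/
def afun (τ : ℕ) : ℕ → Fin 2 := fun q => if q ≤ τ ∨ q = 4*τ then 0 else 1

lemma fin2cases (x : Fin 2) : x = 0 ∨ x = 1 := by omega

/-! ### Generic hitting-time lemmas -/

lemma one_le_hitExp (P : Fin 2 → Fin 2 → ℝ) (tgt s : Fin 2) : 1 ≤ hitExp P tgt s := by
  have h0 : ENNReal.ofReal (surv P tgt 0 s) = 1 := by simp [surv]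
  calc (1:ℝ≥0∞) = ENNReal.ofReal (surv P tgt 0 s) := h0.symm
    _ ≤ hitExp P tgt s := ENNReal.le_tsum 0

lemma hitExp_eq_one (P : Fin 2 → Fin 2 → ℝ) (tgt s : Fin 2)
    (h : ∀ u, u ≠ tgt → P s u = 0) : hitExp P tgt s = 1 := by
  have hz : ∀ n, surv P tgt (n + 1) s = 0 := by
    intro n
    show (∑ u, (if u = tgt then 0 else P s u * surv P tgt n u)) = 0
    apply Finset.sum_eq_zero
    intro u _
    by_cases hu : u = tgt
    · simp [hu]
    · simp [hu, h u hu]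
  have := tsum_eq_single (L := SummationFilter.unconditional ℕ) (f := fun n => ENNReal.ofReal (surv P tgt n s)) 0 (by
    intro n hn
    obtain ⟨m, rfl⟩ := Nat.exists_eq_succ_of_ne_zero hn
    simp [hz])
  rw [hitExp, this]
  simp [surv]

lemma surv01 (P : Fin 2 → Fin 2 → ℝ) : ∀ n, surv P 1 n 0 = (P 0 0) ^ n
  | 0 => by simp [surv]
  | n + 1 => by
    show (∑ u, (if u = (1:Fin 2) then 0 else P 0 u * surv P 1 n u)) = _
    rw [Fin.sum_univ_two]
    simp [surv01 P n, pow_succ, mul_comm]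

lemma hitExp_geom (τ : ℕ) (P : Fin 2 → Fin 2 → ℝ) (h : P 0 0 = (τ : ℝ) / (τ + 1)) :
    hitExp P 1 0 = (τ : ℝ≥0∞) + 1 := by
  have hτ1 : (0:ℝ) < (τ:ℝ) + 1 := by positivity
  have hr : (0:ℝ) ≤ (τ:ℝ) / (τ+1) := by positivity
  have hT : ((τ:ℝ≥0∞) + 1) ≠ 0 := by simp
  have hT' : ((τ:ℝ≥0∞) + 1) ≠ ⊤ := by simp [ENNReal.add_ne_top]
  have hof : ENNReal.ofReal ((τ:ℝ) / (τ+1)) = (τ : ℝ≥0∞) * ((τ:ℝ≥0∞)+1)⁻¹ := by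
    rw [ENNReal.ofReal_div_of_pos hτ1, div_eq_mul_inv]
    congr 1
    · exact ENNReal.ofReal_natCast τ
    · congr 1
      rw [ENNReal.ofReal_add (by positivity) zero_le_one]
      simp [ENNReal.ofReal_natCast]
  have hkey : (1:ℝ≥0∞) - ENNReal.ofReal ((τ:ℝ)/(τ+1)) = ((τ:ℝ≥0∞)+1)⁻¹ := by
    rw [hof]
    apply ENNReal.sub_eq_of_eq_add
    · exact ENNReal.mul_ne_top (by simp) (ENNReal.inv_ne_top.mpr hT)
    · have : ((τ:ℝ≥0∞)+1)⁻¹ + (τ:ℝ≥0∞) * ((τ:ℝ≥0∞)+1)⁻¹ = (1 + (τ:ℝ≥0∞)) * ((τ:ℝ≥0∞)+1)⁻¹ := by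
        ring
      rw [this, add_comm (1:ℝ≥0∞), ENNReal.mul_inv_cancel hT hT']
  calc hitExp P 1 0 = ∑' n : ℕ, (ENNReal.ofReal ((τ:ℝ)/(τ+1))) ^ n := by
        rw [hitExp]
        congr 1; funext n
        rw [surv01, h, ENNReal.ofReal_pow hr]
    _ = ((1:ℝ≥0∞) - ENNReal.ofReal ((τ:ℝ)/(τ+1)))⁻¹ := ENNReal.tsum_geometric _
    _ = (τ : ℝ≥0∞) + 1 := by rw [hkey, inv_inv]

lemma hitExp_top (P : Fin 2 → Fin 2 → ℝ) (h : P 0 0 = 1) : hitExp P 1 0 = ⊤ := by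
  rw [hitExp]
  have : ∀ n : ℕ, ENNReal.ofReal (surv P 1 n 0) = 1 := by
    intro n; rw [surv01, h]; simp
  simp only [this]
  exact ENNReal.tsum_const_eq_top_of_ne_zero one_ne_zero

/-! ### Diameters of the true kernels -/

lemma diam_ge_one (p : Fin 2 → Fin 2 → Fin 2 → ℝ) : 1 ≤ diam p := by
  apply le_iSup_of_le 0
  apply le_iSup_of_le 0
  exact le_iInf fun π => one_le_hitExp _ _ _

lemma diam_K1 : diam K1 = 1 := by
  refine le_antisymm ?_ (diam_ge_one K1)
  apply iSup_le; intro s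
  apply iSup_le; intro s'
  apply iInf_le_of_le (fun _ => s' - s)
  apply le_of_eq
  apply hitExp_eq_one
  intro u hu
  fin_cases s <;> fin_cases s' <;> fin_cases u <;> simp_all [K1]

lemma diam_K2 : diam K2 = 1 := by
  refine le_antisymm ?_ (diam_ge_one K2)
  apply iSup_le; intro s
  apply iSup_le; intro s'
  apply iInf_le_of_le (fun _ => s' - s - 1)
  apply le_of_eq
  apply hitExp_eq_one
  intro u hu
  fin_cases s <;> fin_cases s' <;> fin_cases u <;> simp_all [K2]

/-! ### Counting visits along the trajectory -/

section
variable (τ : ℕ) (hτ : 0 < τ)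

lemma sfun_iff (q : ℕ) : (sfun τ q = 0 ↔ q ≤ 4*τ) ∧ (sfun τ q = 1 ↔ ¬ q ≤ 4*τ) := by
  by_cases h : q ≤ 4*τ <;> simp [sfun, h]

lemma afun_iff (q : ℕ) : (afun τ q = 0 ↔ (q ≤ τ ∨ q = 4*τ)) ∧ (afun τ q = 1 ↔ ¬(q ≤ τ ∨ q = 4*τ)) := by
  by_cases h : q ≤ τ ∨ q = 4*τ <;> simp [afun, h]

include hτ

lemma card00 : ((Finset.Icc 1 (4*τ)).filter (fun q => sfun τ q = 0 ∧ afun τ q = 0)).card = τ + 1 := by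
  have : ((Finset.Icc 1 (4*τ)).filter (fun q => sfun τ q = 0 ∧ afun τ q = 0)) = insert (4*τ) (Icc 1 τ) := by
    ext q
    simp only [mem_filter, mem_Icc, mem_insert, (sfun_iff τ q).1, (afun_iff τ q).1]
    omega
  rw [this, Finset.card_insert_of_notMem (by simp; omega), Nat.card_Icc]
  omega

lemma card000 : ((Finset.Icc 1 (4*τ)).filter (fun q => sfun τ q = 0 ∧ afun τ q = 0 ∧ sfun τ (q+1) = 0)).card = τ := by
  have : ((Finset.Icc 1 (4*τ)).filter (fun q => sfun τ q = 0 ∧ afun τ q = 0 ∧ sfun τ (q+1) = 0)) = Icc 1 τ := by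
    ext q
    simp only [mem_filter, mem_Icc, (sfun_iff τ q).1, (afun_iff τ q).1, (sfun_iff τ (q+1)).1]
    omega
  rw [this, Nat.card_Icc]; omega

lemma card001 : ((Finset.Icc 1 (4*τ)).filter (fun q => sfun τ q = 0 ∧ afun τ q = 0 ∧ sfun τ (q+1) = 1)).card = 1 := by
  have : ((Finset.Icc 1 (4*τ)).filter (fun q => sfun τ q = 0 ∧ afun τ q = 0 ∧ sfun τ (q+1) = 1)) = {4*τ} := by
    ext q
    simp only [mem_filter, mem_Icc, mem_singleton, (sfun_iff τ q).1, (afun_iff τ q).1, (sfun_iff τ (q+1)).2]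
    omega
  rw [this, Finset.card_singleton]

lemma card01 : ((Finset.Icc 1 (4*τ)).filter (fun q => sfun τ q = 0 ∧ afun τ q = 1)).card = 3*τ - 1 := by
  have : ((Finset.Icc 1 (4*τ)).filter (fun q => sfun τ q = 0 ∧ afun τ q = 1)) = Icc (τ+1) (4*τ-1) := by
    ext q
    simp only [mem_filter, mem_Icc, (sfun_iff τ q).1, (afun_iff τ q).2]
    omega
  rw [this, Nat.card_Icc]
  omega

lemma card010 : ((Finset.Icc 1 (4*τ)).filter (fun q => sfun τ q = 0 ∧ afun τ q = 1 ∧ sfun τ (q+1) = 0)).card = 3*τ - 1 := by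
  have : ((Finset.Icc 1 (4*τ)).filter (fun q => sfun τ q = 0 ∧ afun τ q = 1 ∧ sfun τ (q+1) = 0)) = Icc (τ+1) (4*τ-1) := by
    ext q
    simp only [mem_filter, mem_Icc, (sfun_iff τ q).1, (afun_iff τ q).2, (sfun_iff τ (q+1)).1]
    omega
  rw [this, Nat.card_Icc]
  omega

omit hτ in
lemma card011 : ((Finset.Icc 1 (4*τ)).filter (fun q => sfun τ q = 0 ∧ afun τ q = 1 ∧ sfun τ (q+1) = 1)).card = 0 := by
  have : ((Finset.Icc 1 (4*τ)).filter (fun q => sfun τ q = 0 ∧ afun τ q = 1 ∧ sfun τ (q+1) = 1)) = (∅ : Finset ℕ) := by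
    ext q
    simp only [mem_filter, mem_Icc, Finset.notMem_empty, iff_false, not_and,
      (sfun_iff τ q).1, (afun_iff τ q).2, (sfun_iff τ (q+1)).2]
    omega
  rw [this, Finset.card_empty]

omit hτ in
lemma card1v (b v : Fin 2) : ((Finset.Icc 1 (4*τ)).filter (fun q => sfun τ q = 1 ∧ afun τ q = b ∧ sfun τ (q+1) = v)).card = 0 := by
  have : ((Finset.Icc 1 (4*τ)).filter (fun q => sfun τ q = 1 ∧ afun τ q = b ∧ sfun τ (q+1) = v)) = (∅ : Finset ℕ) := by
    ext q
    simp only [mem_filter, mem_Icc, Finset.notMem_empty, iff_false, not_and, (sfun_iff τ q).2]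
    omega
  rw [this, Finset.card_empty]

lemma empK000 : empK (4*τ) (sfun τ) (afun τ) 0 0 0 = (τ:ℝ)/(τ+1) := by
  rw [empK, card000 τ hτ, card00 τ hτ]
  have : max 1 (τ+1) = τ + 1 := by omega
  rw [this]
  push_cast
  ring

lemma empK001 : empK (4*τ) (sfun τ) (afun τ) 0 0 1 = 1/((τ:ℝ)+1) := by
  rw [empK, card001 τ hτ, card00 τ hτ]
  have : max 1 (τ+1) = τ + 1 := by omega
  rw [this]
  push_cast
  ring

lemma empK010 : empK (4*τ) (sfun τ) (afun τ) 0 1 0 = 1 := by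
  rw [empK, card010 τ hτ, card01 τ hτ]
  have : max 1 (3*τ-1) = 3*τ-1 := by omega
  rw [this]
  rw [div_self]
  exact_mod_cast (by omega : 3*τ-1 ≠ 0)

omit hτ in
lemma empK011 : empK (4*τ) (sfun τ) (afun τ) 0 1 1 = 0 := by
  rw [empK, card011 τ]
  simp

omit hτ in
lemma empK1 (b v : Fin 2) : empK (4*τ) (sfun τ) (afun τ) 1 b v = 0 := by
  rw [empK, card1v τ]
  simp

/-! ### Diameter of the empirical kernel -/

lemma diam_emp : diam (empK (4*τ) (sfun τ) (afun τ)) = (τ : ℝ≥0∞) + 1 := by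
  have hle1 : (1:ℝ≥0∞) ≤ (τ:ℝ≥0∞) + 1 := le_add_self
  apply le_antisymm
  · apply iSup_le; intro s
    apply iSup_le; intro s'
    fin_cases s <;> fin_cases s'
    · refine le_trans (iInf_le _ (fun _ => 1)) ?_
      rw [hitExp_eq_one _ _ _ ?_]
      · exact hle1
      · intro u hu
        rcases fin2cases u with h | h
        · exact absurd h hu
        · subst h; exact empK011 τ
    · refine le_trans (iInf_le _ (fun _ => 0)) ?_
      exact le_of_eq (hitExp_geom τ _ (empK000 τ hτ))
    · refine le_trans (iInf_le _ (fun _ => 1)) ?_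
      rw [hitExp_eq_one _ _ _ ?_]
      · exact hle1
      · intro u hu
        rcases fin2cases u with h | h
        · exact absurd h hu
        · subst h; exact empK1 τ 1 1
    · refine le_trans (iInf_le _ (fun _ => 1)) ?_
      rw [hitExp_eq_one _ _ _ ?_]
      · exact hle1
      · intro u hu
        rcases fin2cases u with h | h
        · subst h; exact empK1 τ 1 0
        · exact absurd h hu
  · apply le_iSup_of_le 0
    apply le_iSup_of_le 1
    apply le_iInf
    intro π
    rcases fin2cases (π 0) with h | h
    · exact le_of_eq (hitExp_geom τ _ (by simp only [h]; exact empK000 τ hτ)).symm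
    · rw [hitExp_top _ (by simp only [h]; exact empK010 τ hτ)]
      exact le_top

end

/-! ### Main theorem -/

/-- Proposition `peril1` (part 1): there is a sequence of deterministic 2-state, 2-action
MDPs, each of diameter 1 and of total ℓ¹ variation at most 6, together with a trajectory
consistent with the dynamics, such that the empirical MDP has diameter exactly `τ + 1`
(where the horizon is `W = 4τ`). -/
theorem empirical_mdp_large_diameter (τ : ℕ) (hτ : 0 < τ) :
    ∃ p : ℕ → Fin 2 → Fin 2 → Fin 2 → ℝ, ∃ s : ℕ → Fin 2, ∃ a : ℕ → Fin 2,
      (∀ t, 1 ≤ t → t ≤ 4 * τ →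
        (∀ u b v, p t u b v = 0 ∨ p t u b v = 1) ∧
          (∀ u b, ∑ v, p t u b v = 1) ∧ diam (p t) = 1) ∧
      (∑ t ∈ Finset.Icc 1 (4 * τ - 1),
          ⨆ u : Fin 2, ⨆ b : Fin 2, ∑ v, |p (t + 1) u b v - p t u b v|) ≤ 6 ∧
      (∀ q, 1 ≤ q → q ≤ 4 * τ → p q (s q) (a q) (s (q + 1)) = 1) ∧
      diam (empK (4 * τ) s a) = (τ : ℝ≥0∞) + 1 := by
  refine ⟨fun t => if t ≤ τ then K1 else K2, sfun τ, afun τ, ?_, ?_, ?_, diam_emp τ hτ⟩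
  · intro t _ _
    by_cases ht : t ≤ τ <;> simp only [ht, if_true, if_false]
    · refine ⟨?_, ?_, diam_K1⟩
      · intro u b v
        rcases eq_or_ne v (u + b) with h | h <;> simp [K1, h]
      · intro u b
        rw [Fin.sum_univ_two]
        rcases fin2cases (u + b) with h | h <;> simp [K1, h]
    · refine ⟨?_, ?_, diam_K2⟩
      · intro u b v
        rcases eq_or_ne v (u + b + 1) with h | h <;> simp [K2, h]
      · intro u b
        rw [Fin.sum_univ_two]
        rcases fin2cases (u + b + 1) with h | h <;> simp [K2, h]
  · have hbound : ∀ t ∈ Finset.Icc 1 (4*τ - 1),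
        (⨆ u : Fin 2, ⨆ b : Fin 2, ∑ v, |(if t + 1 ≤ τ then K1 else K2) u b v
            - (if t ≤ τ then K1 else K2) u b v|)
          ≤ (if t = τ then 2 else 0 : ℝ) := by
      intro t ht
      simp only [mem_Icc] at ht
      by_cases hteq : t = τ
      · subst hteq
        have h1 : ¬ (t + 1 ≤ t) := by omega
        have h2 : t ≤ t := le_refl t
        simp only [h1, h2, if_true, if_false]
        have hval : ∀ u b : Fin 2, (∑ v, |K2 u b v - K1 u b v|) = 2 := by
          intro u b
          rw [Fin.sum_univ_two]
          fin_cases u <;> fin_cases b <;> simp [K1, K2] <;> norm_num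
        calc (⨆ u : Fin 2, ⨆ b : Fin 2, ∑ v, |K2 u b v - K1 u b v|)
            = ⨆ u : Fin 2, ⨆ b : Fin 2, (2:ℝ) := by
              congr 1; funext u; congr 1; funext b; exact hval u b
          _ = 2 := by rw [ciSup_const, ciSup_const]
          _ ≤ 2 := le_refl _
      · have hsame : (if t + 1 ≤ τ then K1 else K2) = (if t ≤ τ then K1 else K2) := by
          by_cases h : t ≤ τ
          · have : t + 1 ≤ τ := by omega
            simp [h, this]
          · have : ¬ (t + 1 ≤ τ) := by omega
            simp [h, this]
        rw [hsame]
        simp only [sub_self, abs_zero, Finset.sum_const, Finset.card_univ, Fintype.card_fin,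
          nsmul_eq_mul, mul_zero]
        rw [ciSup_const, ciSup_const, if_neg hteq]
    calc (∑ t ∈ Finset.Icc 1 (4*τ - 1),
          ⨆ u : Fin 2, ⨆ b : Fin 2, ∑ v, |(if t + 1 ≤ τ then K1 else K2) u b v
            - (if t ≤ τ then K1 else K2) u b v|)
        ≤ ∑ t ∈ Finset.Icc 1 (4*τ - 1), (if t = τ then 2 else 0 : ℝ) :=
          Finset.sum_le_sum hbound
      _ = 2 := by
          rw [Finset.sum_ite_eq' (Finset.Icc 1 (4*τ-1)) τ (fun _ => (2:ℝ))]
          simp only [mem_Icc, if_pos (by omega : 1 ≤ τ ∧ τ ≤ 4*τ-1)]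
      _ ≤ 6 := by norm_num
  · intro q hq1 hq2
    have hs0 : sfun τ q = 0 := by simp [sfun, hq2]
    show (if q ≤ τ then K1 else K2) (sfun τ q) (afun τ q) (sfun τ (q + 1)) = 1
    by_cases hqτ : q ≤ τ
    · have hs1 : sfun τ (q + 1) = 0 := by simp [sfun, show q + 1 ≤ 4*τ by omega]
      have ha : afun τ q = 0 := by simp [afun, hqτ]
      rw [hs0, hs1, ha, if_pos hqτ]
      norm_num [K1]
    · rw [if_neg hqτ]
      by_cases hq4 : q = 4*τ
      · have hs1 : sfun τ (q + 1) = 1 := by simp [sfun, hq4]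
        have ha : afun τ q = 0 := by simp [afun, hq4]
        rw [hs0, hs1, ha]
        simp [K2]
      · have hs1 : sfun τ (q + 1) = 0 := by simp [sfun]; omega
        have ha : afun τ q = 1 := by simp [afun, hqτ, hq4]
        rw [hs0, hs1, ha]
        simp [K2]
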